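/- Let α = (α_n) be a sequence of nonnegative integers with α_n ≤ α_{n+1} and α_n ≤ n for all n, and define Q_α((x_n)) = (φ_{α_n}^n(x_{α_n}))_n. Then for every x ∈ Ĵ(Φ) and every finite nonempty S ⊆ ℕ_0, ρ(Q_α(x), S) ≤ ρ(x, {α_p : p ∈ S}). -/
import Mathlib


open Filter Topology

/-- Composition `φ_n^m = φ_{m-1} ∘ ⋯ ∘ φ_n : X n →L X m` (junk value for `m < n`). -/
noncomputable def phiTo {X : ℕ → Type*} [∀ n, NormedAddCommGroup (X n)]
    [∀ n, NormedSpace ℝ (X n)] (φ : ∀ n, X n →L[ℝ] X (n + 1)) (n : ℕ) :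
    (m : ℕ) → X n →L[ℝ] X m
  | 0 => 0
  | m + 1 =>
    if h : m + 1 = n then by rw [h]; exact ContinuousLinearMap.id ℝ (X n)
    else (φ m).comp (phiTo φ n m)

open Classical in
/-- `σ(x,S)²`: the sum over consecutive pairs `p < q` of `S` of `‖φ_p^q(x_p) - x_q‖²`. -/
noncomputable def sigma2 {X : ℕ → Type*} [∀ n, NormedAddCommGroup (X n)]
    [∀ n, NormedSpace ℝ (X n)] (φ : ∀ n, X n →L[ℝ] X (n + 1))
    (x : ∀ n, X n) (S : Finset ℕ) : ℝ :=
  ∑ p ∈ S, ∑ q ∈ S,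
    if p < q ∧ ∀ r ∈ S, ¬(p < r ∧ r < q) then ‖phiTo φ p q (x p) - x q‖ ^ 2 else 0

noncomputable def sigmaJ {X : ℕ → Type*} [∀ n, NormedAddCommGroup (X n)]
    [∀ n, NormedSpace ℝ (X n)] (φ : ∀ n, X n →L[ℝ] X (n + 1))
    (x : ∀ n, X n) (S : Finset ℕ) : ℝ :=
  Real.sqrt (sigma2 φ x S)

/-- `ρ(x,S)² = σ(x,S)² + ‖x_{max S}‖²`. -/
noncomputable def rho2 {X : ℕ → Type*} [∀ n, NormedAddCommGroup (X n)]
    [∀ n, NormedSpace ℝ (X n)] (φ : ∀ n, X n →L[ℝ] X (n + 1))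
    (x : ∀ n, X n) (S : Finset ℕ) (hS : S.Nonempty) : ℝ :=
  sigma2 φ x S + ‖x (S.max' hS)‖ ^ 2

noncomputable def rhoJ {X : ℕ → Type*} [∀ n, NormedAddCommGroup (X n)]
    [∀ n, NormedSpace ℝ (X n)] (φ : ∀ n, X n →L[ℝ] X (n + 1))
    (x : ∀ n, X n) (S : Finset ℕ) (hS : S.Nonempty) : ℝ :=
  Real.sqrt (rho2 φ x S hS)

/-- The set of values `ρ(x,S)` over finite nonempty `S ⊆ ℕ`. -/
def rhoSet {X : ℕ → Type*} [∀ n, NormedAddCommGroup (X n)]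
    [∀ n, NormedSpace ℝ (X n)] (φ : ∀ n, X n →L[ℝ] X (n + 1))
    (x : ∀ n, X n) : Set ℝ :=
  {r : ℝ | ∃ (S : Finset ℕ) (hS : S.Nonempty), r = rhoJ φ x S hS}

/-- Membership in `Ĵ(Φ)`: `sup_S ρ(x,S) < ∞`. -/
def memJhat {X : ℕ → Type*} [∀ n, NormedAddCommGroup (X n)]
    [∀ n, NormedSpace ℝ (X n)] (φ : ∀ n, X n →L[ℝ] X (n + 1))
    (x : ∀ n, X n) : Prop :=
  BddAbove (rhoSet φ x)

/-- The norm `‖x‖_J = (1/√2) sup_S ρ(x,S)`. -/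
noncomputable def normJ {X : ℕ → Type*} [∀ n, NormedAddCommGroup (X n)]
    [∀ n, NormedSpace ℝ (X n)] (φ : ∀ n, X n →L[ℝ] X (n + 1))
    (x : ∀ n, X n) : ℝ :=
  (Real.sqrt 2)⁻¹ * sSup (rhoSet φ x)

/-- Membership in `J(Φ)`: member of `Ĵ(Φ)` with `‖x_n‖ → 0`. -/
def memJ {X : ℕ → Type*} [∀ n, NormedAddCommGroup (X n)]
    [∀ n, NormedSpace ℝ (X n)] (φ : ∀ n, X n →L[ℝ] X (n + 1))
    (x : ∀ n, X n) : Prop :=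
  memJhat φ x ∧ Tendsto (fun n => ‖x n‖) atTop (𝓝 0)

open Classical in
/-- The coordinate restriction `P_I`. -/
noncomputable def restrictSeq {X : ℕ → Type*} [∀ n, NormedAddCommGroup (X n)]
    (I : Set ℕ) (x : ∀ n, X n) : ∀ n, X n :=
  fun n => if n ∈ I then x n else 0

/-- The stepping map `Q_α`. -/
noncomputable def stepSeq {X : ℕ → Type*} [∀ n, NormedAddCommGroup (X n)]
    [∀ n, NormedSpace ℝ (X n)] (φ : ∀ n, X n →L[ℝ] X (n + 1))
    (α : ℕ → ℕ) (x : ∀ n, X n) : ∀ n, X n :=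
  fun n => phiTo φ (α n) n (x (α n))


section Aux10
variable {X : ℕ → Type*} [∀ n, NormedAddCommGroup (X n)] [∀ n, NormedSpace ℝ (X n)]
  [Subsingleton (X 0)] (φ : ∀ n, X n →L[ℝ] X (n + 1))

lemma phiTo_self_apply (n : ℕ) (z : X n) : phiTo φ n n z = z := by
  cases n with
  | zero => exact Subsingleton.elim _ _
  | succ m => simp [phiTo]

omit [Subsingleton (X 0)] in
lemma phiTo_succ_of_ne (n m : ℕ) (h : m + 1 ≠ n) (z : X n) :
    phiTo φ n (m + 1) z = φ m (phiTo φ n m z) := by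
  simp [phiTo, h]

lemma phiTo_norm_le (hφ : ∀ n, ‖φ n‖ ≤ 1) (n m : ℕ) (z : X n) :
    ‖phiTo φ n m z‖ ≤ ‖z‖ := by
  induction m with
  | zero => simp [phiTo]
  | succ m ih =>
    by_cases h : m + 1 = n
    · subst h; rw [phiTo_self_apply]
    · rw [phiTo_succ_of_ne φ n m h]
      calc ‖φ m (phiTo φ n m z)‖ ≤ ‖φ m‖ * ‖phiTo φ n m z‖ := (φ m).le_opNorm _
        _ ≤ 1 * ‖z‖ := mul_le_mul (hφ m) ih (norm_nonneg _) zero_le_one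
        _ = ‖z‖ := one_mul _

lemma phiTo_comp (n m k : ℕ) (hnm : n ≤ m) (hmk : m ≤ k) (z : X n) :
    phiTo φ m k (phiTo φ n m z) = phiTo φ n k z := by
  induction k, hmk using Nat.le_induction with
  | base => rw [phiTo_self_apply]
  | succ k hk ih =>
    rw [phiTo_succ_of_ne φ m k (by omega), phiTo_succ_of_ne φ n k (by omega), ih]

lemma sigma2_step_le (hφ : ∀ n, ‖φ n‖ ≤ 1) (α : ℕ → ℕ) (hα : Monotone α)
    (hαn : ∀ n, α n ≤ n) (x : ∀ n, X n) (S : Finset ℕ) :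
    sigma2 φ (stepSeq φ α x) S ≤ sigma2 φ x (S.image α) := by
  classical
  set T := S.image α with hT
  set y := stepSeq φ α x with hy
  set f : ℕ × ℕ → ℝ := fun pq =>
    if pq.1 < pq.2 ∧ ∀ r ∈ S, ¬(pq.1 < r ∧ r < pq.2)
    then ‖phiTo φ pq.1 pq.2 (y pq.1) - y pq.2‖ ^ 2 else 0 with hf
  set g : ℕ × ℕ → ℝ := fun pq =>
    if pq.1 < pq.2 ∧ ∀ r ∈ T, ¬(pq.1 < r ∧ r < pq.2)
    then ‖phiTo φ pq.1 pq.2 (x pq.1) - x pq.2‖ ^ 2 else 0 with hg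
  have hgnn : ∀ pq, 0 ≤ g pq := by
    intro pq; rw [hg]; dsimp only; split <;> positivity
  have e1 : sigma2 φ y S = ∑ pq ∈ S ×ˢ S, f pq := by
    rw [sigma2, Finset.sum_product]
  have e2 : sigma2 φ x T = ∑ pq ∈ T ×ˢ T, g pq := by
    rw [sigma2, Finset.sum_product]
  rw [e1, e2]
  set A := (S ×ˢ S).filter (fun pq => (pq.1 < pq.2 ∧ ∀ r ∈ S, ¬(pq.1 < r ∧ r < pq.2))
      ∧ α pq.1 < α pq.2) with hA
  have key : ∀ p q : ℕ, p < q → phiTo φ p q (y p) - y q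
      = phiTo φ (α q) q (phiTo φ (α p) (α q) (x (α p)) - x (α q)) := by
    intro p q hpq
    have h1 : phiTo φ p q (y p) = phiTo φ (α p) q (x (α p)) :=
      phiTo_comp φ (α p) p q (hαn p) hpq.le _
    have h2 : phiTo φ (α q) q (phiTo φ (α p) (α q) (x (α p))) = phiTo φ (α p) q (x (α p)) :=
      phiTo_comp φ (α p) (α q) q (hα hpq.le) (hαn q) _
    rw [map_sub, h1, h2, hy]; rfl
  have hsum1 : ∑ pq ∈ S ×ˢ S, f pq = ∑ pq ∈ A, f pq := by
    rw [hA]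
    refine (Finset.sum_filter_of_ne ?_).symm
    rintro ⟨p, q⟩ hpq hne
    rw [hf] at hne; dsimp only at hne
    by_cases hc : p < q ∧ ∀ r ∈ S, ¬(p < r ∧ r < q)
    · refine ⟨hc, ?_⟩
      rcases lt_or_eq_of_le (hα hc.1.le) with h | h
      · exact h
      · exfalso; apply hne
        rw [if_pos hc, key p q hc.1, h]
        simp [phiTo_self_apply]
    · exact absurd (if_neg hc) hne
  rw [hsum1]
  have hterm : ∀ pq ∈ A, f pq ≤ g (α pq.1, α pq.2) := by
    rintro ⟨p, q⟩ hpq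
    rw [hA, Finset.mem_filter] at hpq
    obtain ⟨hmem, hc, hlt⟩ := hpq
    rw [Finset.mem_product] at hmem
    have hcT : α p < α q ∧ ∀ r ∈ T, ¬(α p < r ∧ r < α q) := by
      refine ⟨hlt, ?_⟩
      rintro r hr ⟨h1, h2⟩
      rw [hT, Finset.mem_image] at hr
      obtain ⟨s, hs, rfl⟩ := hr
      have hps : p < s := by by_contra h; exact absurd (hα (not_lt.mp h)) (not_le.mpr h1)
      have hsq : s < q := by by_contra h; exact absurd (hα (not_lt.mp h)) (not_le.mpr h2)
      exact hc.2 s hs ⟨hps, hsq⟩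
    rw [hf, hg]; dsimp only
    rw [if_pos hc, if_pos hcT, key p q hc.1]
    have := phiTo_norm_le φ hφ (α q) q (phiTo φ (α p) (α q) (x (α p)) - x (α q))
    exact pow_le_pow_left₀ (norm_nonneg _) this 2
  have hinj : Set.InjOn (fun pq : ℕ × ℕ => (α pq.1, α pq.2)) A := by
    rintro ⟨p, q⟩ hpq ⟨p', q'⟩ hpq' heq
    rw [hA, Finset.mem_coe, Finset.mem_filter, Finset.mem_product] at hpq hpq'
    obtain ⟨⟨hpS, hqS⟩, hc, hlt⟩ := hpq
    obtain ⟨⟨hpS', hqS'⟩, hc', hlt'⟩ := hpq'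
    simp only [Prod.mk.injEq] at heq
    obtain ⟨hap, haq⟩ := heq
    have hpp' : p = p' := by
      by_contra hne
      rcases lt_or_gt_of_ne hne with h | h
      · rcases lt_or_ge p' q with h2 | h2
        · exact hc.2 p' hpS' ⟨h, h2⟩
        · exact absurd (hap ▸ hα h2 : α q ≤ α p) (not_le.mpr hlt)
      · rcases lt_or_ge p q' with h2 | h2
        · exact hc'.2 p hpS ⟨h, h2⟩
        · exact absurd (hap ▸ hα h2 : α q' ≤ α p') (not_le.mpr hlt')
    subst hpp'
    have hqq' : q = q' := by
      by_contra hne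
      rcases lt_or_gt_of_ne hne with h | h
      · exact hc'.2 q hqS ⟨hc.1, h⟩
      · exact hc.2 q' hqS' ⟨hc'.1, h⟩
    simp [hqq']
  calc ∑ pq ∈ A, f pq ≤ ∑ pq ∈ A, g (α pq.1, α pq.2) := Finset.sum_le_sum hterm
    _ = ∑ pq ∈ A.image (fun pq : ℕ × ℕ => (α pq.1, α pq.2)), g pq :=
        (Finset.sum_image (fun a ha b hb h => hinj ha hb h)).symm
    _ ≤ ∑ pq ∈ T ×ˢ T, g pq := by
        apply Finset.sum_le_sum_of_subset_of_nonneg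
        · intro pq hpq
          rw [Finset.mem_image] at hpq
          obtain ⟨⟨p, q⟩, hpq', rfl⟩ := hpq
          rw [hA, Finset.mem_filter, Finset.mem_product] at hpq'
          rw [Finset.mem_product, hT]
          exact ⟨Finset.mem_image_of_mem α hpq'.1.1, Finset.mem_image_of_mem α hpq'.1.2⟩
        · intro pq _ _; exact hgnn pq
end Aux10

/-- for a nondecreasing `α` with `α_n ≤ n`,
`ρ(Q_α(x), S) ≤ ρ(x, α(S))` for every `x ∈ Ĵ(Φ)` and finite nonempty `S`. -/
theorem stmt10 {X : ℕ → Type*} [∀ n, NormedAddCommGroup (X n)] [∀ n, NormedSpace ℝ (X n)]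
    [∀ n, CompleteSpace (X n)] [Subsingleton (X 0)]
    (φ : ∀ n, X n →L[ℝ] X (n + 1)) (hφ : ∀ n, ‖φ n‖ ≤ 1)
    (α : ℕ → ℕ) (hα : Monotone α) (hαn : ∀ n, α n ≤ n)
    (x : ∀ n, X n) (hx : memJhat φ x)
    (S : Finset ℕ) (hS : S.Nonempty) :
    rhoJ φ (stepSeq φ α x) S hS ≤ rhoJ φ x (S.image α) (hS.image α) := by
  unfold rhoJ
  apply Real.sqrt_le_sqrt
  unfold rho2
  have hmax : (S.image α).max' (hS.image α) = α (S.max' hS) :=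
    Finset.max'_image hα S _
  have h2 : ‖stepSeq φ α x (S.max' hS)‖ ^ 2 ≤ ‖x ((S.image α).max' (hS.image α))‖ ^ 2 := by
    rw [hmax]
    exact pow_le_pow_left₀ (norm_nonneg _)
      (phiTo_norm_le φ hφ (α (S.max' hS)) (S.max' hS) _) 2
  exact add_le_add (sigma2_step_le φ hφ α hα hαn x S) h2
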